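/- Let r₀ > 0 and let J_z : [0,r₀] → [0,∞) be continuous, not identically zero, and compactly supported in the open interval (0,r₀). Define B_θ(r) = (1/r) ∫₀^r s J_z(s) ds for r ∈ (0,r₀] and p'(r) = −B_θ(r) J_z(r). Then for every integer m ≠ 0 there exists r* ∈ (0,r₀) such that 2 p'(r*) + m² B_θ(r*)² / r* < 0. -/

import Mathlib

open Set MeasureTheory

/-- Corollary 2.7. If the axial current `J_z ≥ 0` is continuous, not
identically zero, and compactly supported in `(0,r₀)`, then for every integer `m ≠ 0` the
instability criterion `2 p'(r*) + m² B_θ(r*)²/r* < 0` holds for some `r* ∈ (0,r₀)`. -/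
theorem zpinch_instability_criterion_compact_support
    (r₀ : ℝ) (hr₀ : 0 < r₀)
    (Jz : ℝ → ℝ)
    (hJc : ContinuousOn Jz (Icc (0:ℝ) r₀))
    (hJnn : ∀ r ∈ Icc (0:ℝ) r₀, 0 ≤ Jz r)
    (hJne : ∃ r ∈ Icc (0:ℝ) r₀, Jz r ≠ 0)
    (a b : ℝ) (ha : 0 < a) (hab : a ≤ b) (hb : b < r₀)
    (hsupp : ∀ r : ℝ, Jz r ≠ 0 → r ∈ Icc a b)
    (Bθ p' : ℝ → ℝ)
    (hBθ : ∀ r ∈ Ioc (0:ℝ) r₀, Bθ r = (1 / r) * ∫ s in (0:ℝ)..r, s * Jz s)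
    (hp' : ∀ r ∈ Ioc (0:ℝ) r₀, p' r = -(Bθ r * Jz r)) :
    ∀ m : ℤ, m ≠ 0 →
      ∃ r ∈ Ioo (0:ℝ) r₀, 2 * p' r + (m:ℝ) ^ 2 * (Bθ r) ^ 2 / r < 0 := by
  intro m hm
  by_contra hcon
  push_neg at hcon
  -- the integrand
  set g : ℝ → ℝ := fun s => s * Jz s with hg
  have hgc : ContinuousOn g (Icc (0:ℝ) r₀) := (continuous_id.continuousOn).mul hJc
  -- primitive
  set f : ℝ → ℝ := fun r => ∫ s in (0:ℝ)..r, g s with hf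
  set k : ℕ := m.natAbs ^ 2 with hk
  have hkm : ((k : ℝ)) = (m : ℝ) ^ 2 := by
    rw [hk]; push_cast [Nat.cast_natAbs]; rw [sq_abs]
  -- integrability of g on subintervals of [0, r₀]
  have hgint : ∀ c d : ℝ, 0 ≤ c → c ≤ d → d ≤ r₀ → IntervalIntegrable g volume c d := by
    intro c d hc hcd hd
    exact (hgc.mono (Icc_subset_Icc hc hd)).intervalIntegrable_of_Icc hcd
  -- nonnegativity of f
  have hfnn : ∀ r ∈ Icc (0:ℝ) r₀, 0 ≤ f r := by
    intro r hr
    apply intervalIntegral.integral_nonneg hr.1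
    intro u hu
    exact mul_nonneg hu.1 (hJnn u ⟨hu.1, hu.2.trans hr.2⟩)
  -- f a = 0 since Jz = 0 on [0, a)
  have hfa : f a = 0 := by
    show (∫ s in (0:ℝ)..a, g s) = 0
    rw [intervalIntegral.integral_of_le ha.le]
    apply setIntegral_eq_zero_of_ae_eq_zero
    have h1 : ∀ᵐ x : ℝ, x ≠ a := by
      rw [ae_iff]
      convert Real.volume_singleton (a := a) using 2
      ext x
      simp
    filter_upwards [h1] with x hx hxm
    have hxa : x < a := lt_of_le_of_ne hxm.2 hx
    have : Jz x = 0 := by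
      by_contra hne
      exact absurd ((hsupp x hne).1) (not_le.2 hxa)
    simp [hg, this]
  -- a point where Jz is positive
  obtain ⟨r₂, hr₂mem, hr₂ne⟩ := hJne
  have hr₂ab : r₂ ∈ Icc a b := hsupp r₂ hr₂ne
  have hr₂pos : 0 < Jz r₂ := lt_of_le_of_ne (hJnn r₂ hr₂mem) (Ne.symm hr₂ne)
  set r₁ : ℝ := (b + r₀) / 2 with hr₁
  have hbr₁ : b < r₁ := by rw [hr₁]; linarith
  have hr₁r₀ : r₁ < r₀ := by rw [hr₁]; linarith
  have har₁ : a < r₁ := lt_of_le_of_lt hab hbr₁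
  have hr₁pos : 0 < r₁ := lt_trans ha har₁
  -- continuity at points of (0, r₀)
  have hnhds : ∀ r ∈ Ioo (0:ℝ) r₀, Icc (0:ℝ) r₀ ∈ nhds r := fun r hr =>
    Icc_mem_nhds hr.1 hr.2
  have hgcat : ∀ r ∈ Ioo (0:ℝ) r₀, ContinuousAt g r := fun r hr =>
    hgc.continuousAt (hnhds r hr)
  -- positivity of f r₁
  have hfr₁pos : 0 < f r₁ := by
    have hr₂Ioo : r₂ ∈ Ioo (0:ℝ) r₀ := ⟨lt_of_lt_of_le ha hr₂ab.1, lt_of_le_of_lt hr₂ab.2 hb⟩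
    have hgr₂ : 0 < g r₂ := mul_pos hr₂Ioo.1 hr₂pos
    have := (hgcat r₂ hr₂Ioo).eventually (eventually_gt_nhds (half_lt_self hgr₂))
    obtain ⟨ε, hε, hball⟩ := Metric.eventually_nhds_iff.mp this
    set c : ℝ := max (r₂ - ε / 2) (r₂ / 2) with hc
    have hcr₂ : c < r₂ :=
      max_lt (by linarith) (by linarith [hr₂Ioo.1])
    have hc0 : 0 < c := lt_of_lt_of_le (by linarith [hr₂Ioo.1]) (le_max_right _ _)
    have hposIoo : ∀ x ∈ Ioo c r₂, 0 < g x := by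
      intro x hx
      have : dist x r₂ < ε := by
        rw [Real.dist_eq, abs_lt]
        constructor
        · have := lt_of_le_of_lt (le_max_left _ _) hx.1
          linarith
        · linarith [hx.2]
      linarith [hball this]
    have hint1 : IntervalIntegrable g volume c r₂ :=
      hgint c r₂ hc0.le hcr₂.le (le_of_lt (lt_of_le_of_lt hr₂ab.2 hb))
    have hpos1 : 0 < ∫ s in c..r₂, g s :=
      intervalIntegral.intervalIntegral_pos_of_pos_on hint1 hposIoo hcr₂
    -- f r₁ = ∫₀^c + ∫_c^{r₂} + ∫_{r₂}^{r₁}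
    have hi0c : IntervalIntegrable g volume 0 c := hgint 0 c le_rfl hc0.le
      (le_trans hcr₂.le (le_of_lt (lt_of_le_of_lt hr₂ab.2 hb)))
    have hir₂r₁ : IntervalIntegrable g volume r₂ r₁ := hgint r₂ r₁ hr₂Ioo.1.le
      (le_trans hr₂ab.2 hbr₁.le) hr₁r₀.le
    have hi0r₂ : IntervalIntegrable g volume 0 r₂ := hgint 0 r₂ le_rfl hr₂Ioo.1.le hr₂Ioo.2.le
    have hsplit1 : (∫ s in (0:ℝ)..c, g s) + (∫ s in c..r₂, g s) = ∫ s in (0:ℝ)..r₂, g s :=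
      intervalIntegral.integral_add_adjacent_intervals hi0c hint1
    have hsplit2 : (∫ s in (0:ℝ)..r₂, g s) + (∫ s in r₂..r₁, g s) = ∫ s in (0:ℝ)..r₁, g s :=
      intervalIntegral.integral_add_adjacent_intervals hi0r₂ hir₂r₁
    have h0c : 0 ≤ ∫ s in (0:ℝ)..c, g s := by
      apply intervalIntegral.integral_nonneg hc0.le
      intro u hu
      exact mul_nonneg hu.1 (hJnn u ⟨hu.1, le_trans hu.2
        (le_trans hcr₂.le (le_of_lt (lt_of_le_of_lt hr₂ab.2 hb)))⟩)
    have hr₂r₁ : 0 ≤ ∫ s in r₂..r₁, g s := by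
      apply intervalIntegral.integral_nonneg (le_trans hr₂ab.2 hbr₁.le)
      intro u hu
      exact mul_nonneg (le_trans hr₂Ioo.1.le hu.1) (hJnn u ⟨le_trans hr₂Ioo.1.le hu.1,
        hu.2.trans hr₁r₀.le⟩)
    have : f r₁ = (∫ s in (0:ℝ)..c, g s) + (∫ s in c..r₂, g s) + (∫ s in r₂..r₁, g s) := by
      rw [hf]; rw [hsplit1, hsplit2]
    linarith
  -- derivative of f on (0, r₀)
  have hfderiv : ∀ r ∈ Ioo (0:ℝ) r₀, HasDerivAt f (g r) r := by
    intro r hr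
    exact intervalIntegral.integral_hasDerivAt_right (hgint 0 r le_rfl hr.1.le hr.2.le)
      (ContinuousOn.stronglyMeasurableAtFilter isOpen_Ioo
        (fun x hx => (hgcat x hx).continuousWithinAt) r hr) (hgcat r hr)
  -- the monotone quantity
  set h : ℝ → ℝ := fun r => (f r) ^ 2 / r ^ k with hh
  have hhderiv : ∀ r ∈ Ioo a r₁, HasDerivAt h
      ((2 * f r * g r * r ^ k - (f r) ^ 2 * ((k : ℝ) * r ^ (k - 1))) / (r ^ k) ^ 2) r := by
    intro r hr
    have hr0 : 0 < r := lt_trans ha hr.1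
    have hrIoo : r ∈ Ioo (0:ℝ) r₀ := ⟨hr0, lt_trans hr.2 hr₁r₀⟩
    have h1 : HasDerivAt (fun r => (f r) ^ 2) (2 * f r * g r) r := by
      have := (hfderiv r hrIoo).pow 2
      simpa [mul_comm, mul_assoc, mul_left_comm, Pi.pow_def] using this
    have h2 : HasDerivAt (fun r : ℝ => r ^ k) ((k : ℝ) * r ^ (k - 1)) r := by
      simpa using hasDerivAt_pow k r
    exact h1.div h2 (pow_ne_zero _ hr0.ne')
  -- deriv h ≤ 0 on the interior, using the contradiction hypothesis
  have hderiv_nonpos : ∀ r ∈ interior (Icc a r₁), deriv h r ≤ 0 := by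
    intro r hr
    rw [interior_Icc] at hr
    have hr0 : 0 < r := lt_trans ha hr.1
    have hrIoo : r ∈ Ioo (0:ℝ) r₀ := ⟨hr0, lt_trans hr.2 hr₁r₀⟩
    have hrIoc : r ∈ Ioc (0:ℝ) r₀ := ⟨hr0, hrIoo.2.le⟩
    rw [(hhderiv r hr).deriv]
    -- from the contradiction hypothesis: 2 r² f J ≤ k f²
    have hle := hcon r hrIoo
    rw [hp' r hrIoc, hBθ r hrIoc] at hle
    have hfr : (1 / r) * ∫ s in (0:ℝ)..r, s * Jz s = f r / r := by
      rw [hf]; ring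
    rw [hfr] at hle
    have hJr : 0 ≤ Jz r := hJnn r ⟨hr0.le, hrIoo.2.le⟩
    have hfrnn : 0 ≤ f r := hfnn r ⟨hr0.le, hrIoo.2.le⟩
    rw [← hkm] at hle
    have hmul : 0 ≤ (2 * -(f r / r * Jz r) + (k:ℝ) * (f r / r) ^ 2 / r) * r ^ 3 :=
      mul_nonneg hle (by positivity)
    have heq : (2 * -(f r / r * Jz r) + (k:ℝ) * (f r / r) ^ 2 / r) * r ^ 3
        = (k:ℝ) * (f r) ^ 2 - 2 * r ^ 2 * f r * Jz r := by
      field_simp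
      ring
    rw [heq] at hmul
    have hkey : 2 * r ^ 2 * f r * Jz r ≤ (k : ℝ) * (f r) ^ 2 := by linarith
    apply div_nonpos_of_nonpos_of_nonneg
    · have hrk : 0 < r ^ (k - 1) := by positivity
      have hexp : r ^ k = r ^ (k - 1) * r := by
        rw [← pow_succ]
        congr 1
        have h0 : m.natAbs ≠ 0 := Int.natAbs_ne_zero.mpr hm
        have : 1 ≤ k := Nat.one_le_iff_ne_zero.mpr (by rw [hk]; exact pow_ne_zero _ h0)
        omega
      have hfact : 2 * f r * g r * r ^ k - (f r) ^ 2 * ((k:ℝ) * r ^ (k - 1))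
          = r ^ (k - 1) * (2 * r ^ 2 * f r * Jz r - (k:ℝ) * (f r) ^ 2) := by
        simp only [hg]
        rw [hexp]
        ring
      rw [hfact]
      exact mul_nonpos_of_nonneg_of_nonpos hrk.le (by linarith)
    · positivity
  -- h is antitone on [a, r₁]
  have hsub : Icc a r₁ ⊆ Ioo (0:ℝ) r₀ := fun r hr =>
    ⟨lt_of_lt_of_le ha hr.1, lt_of_le_of_lt hr.2 hr₁r₀⟩
  have hcontH : ContinuousOn h (Icc a r₁) := by
    intro r hr
    have hr' := hsub hr
    have hc1 : ContinuousAt h r := by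
      exact (((hfderiv r hr').continuousAt.pow 2).div ((continuous_pow k).continuousAt)
        (pow_ne_zero _ (ne_of_gt hr'.1)))
    exact hc1.continuousWithinAt
  have hdiffH : ∀ r ∈ interior (Icc a r₁), DifferentiableAt ℝ h r := by
    intro r hr
    rw [interior_Icc] at hr
    exact (hhderiv r hr).differentiableAt
  have hanti : AntitoneOn h (Icc a r₁) := by
    apply antitoneOn_of_deriv_nonpos (convex_Icc a r₁) hcontH
    · intro r hr
      exact (hdiffH r hr).differentiableWithinAt
    · exact hderiv_nonpos
  have hle2 := hanti (left_mem_Icc.mpr har₁.le) (right_mem_Icc.mpr har₁.le) har₁.le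
  have hha : h a = 0 := by
    show (f a) ^ 2 / a ^ k = 0
    rw [hfa]
    simp
  have hhr₁ : 0 < h r₁ := div_pos (pow_pos hfr₁pos 2) (pow_pos hr₁pos k)
  rw [hha] at hle2
  linarith
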